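/- For fixed λ > 0, the time map T(α;λ) = √(α/λ) ∫₀¹ ((1-αz)(1-α) - λα(1-z)) / (√(1-z)·√(2(1-αz)(1-α) - λα(1-z))) dz tends to 0 as α → 0⁺. -/

import Mathlib

open Filter Set intervalIntegral Real

lemma g_integrable : IntervalIntegrable (fun z : ℝ => 4 * ((1 - z) ^ (-(1/2) : ℝ))) MeasureTheory.volume 0 1 := by
  have h1 : IntervalIntegrable (fun x : ℝ => x ^ (-(1/2) : ℝ)) MeasureTheory.volume 0 1 :=
    intervalIntegral.intervalIntegrable_rpow' (by norm_num)
  have h2 := (h1.comp_sub_left 1)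
  simpa using (h2.const_mul 4).symm

theorem stmt_6 (lam : ℝ) (hlam : 0 < lam) :
    Filter.Tendsto
      (fun α : ℝ => Real.sqrt (α / lam) *
        ∫ z in (0:ℝ)..1, ((1 - α * z) * (1 - α) - lam * α * (1 - z)) /
          (Real.sqrt (1 - z) * Real.sqrt (2 * (1 - α * z) * (1 - α) - lam * α * (1 - z))))
      (nhdsWithin 0 (Set.Ioi 0)) (nhds 0) := by
  set g : ℝ → ℝ := fun z => 4 * ((1 - z) ^ (-(1/2) : ℝ)) with hg
  set C : ℝ := |∫ z in (0:ℝ)..1, g z| with hC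
  set δ : ℝ := min (1/2) (1/(4*lam)) with hδ
  have hδpos : 0 < δ := lt_min (by norm_num) (by positivity)
  -- the squeeze bound
  have hbound : ∀ᶠ α in nhdsWithin 0 (Set.Ioi 0),
      ‖Real.sqrt (α / lam) *
        ∫ z in (0:ℝ)..1, ((1 - α * z) * (1 - α) - lam * α * (1 - z)) /
          (Real.sqrt (1 - z) * Real.sqrt (2 * (1 - α * z) * (1 - α) - lam * α * (1 - z)))‖
        ≤ Real.sqrt (α / lam) * C := by
    filter_upwards [Ioo_mem_nhdsGT_of_mem (by exact ⟨le_refl 0, hδpos⟩ : (0:ℝ) ∈ Ico 0 δ)]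
      with α hα
    obtain ⟨hα0, hαδ⟩ := hα
    have hα12 : α ≤ 1/2 := le_of_lt (lt_of_lt_of_le hαδ (min_le_left _ _))
    have hαlam : lam * α ≤ 1/4 := by
      have h := lt_of_lt_of_le hαδ (min_le_right _ _)
      rw [lt_div_iff₀ (by positivity)] at h
      nlinarith
    have key : ‖∫ z in (0:ℝ)..1, ((1 - α * z) * (1 - α) - lam * α * (1 - z)) /
          (Real.sqrt (1 - z) * Real.sqrt (2 * (1 - α * z) * (1 - α) - lam * α * (1 - z)))‖ ≤ C := by
      refine (intervalIntegral.norm_integral_le_abs_of_norm_le ?_ g_integrable)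
      refine MeasureTheory.ae_restrict_of_forall_mem measurableSet_uIoc ?_
      intro z hz
      rw [Set.uIoc_of_le (by norm_num)] at hz
      obtain ⟨hz0, hz1⟩ := hz
      rcases eq_or_lt_of_le hz1 with h1 | h1
      · subst h1
        simp [hg, Real.zero_rpow (by norm_num : (-(1/2):ℝ) ≠ 0)]
      · have hs : (0:ℝ) < 1 - z := by linarith
        have e1 : (1/2:ℝ) ≤ 1 - α := by linarith
        have e2 : (1/2:ℝ) ≤ 1 - α * z := by nlinarith [mul_le_mul_of_nonneg_left hz1 hα0.le]
        have e3 : (1/4:ℝ) ≤ (1 - α * z) * (1 - α) :=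
          le_trans (by norm_num) (mul_le_mul e2 e1 (by norm_num) (by linarith))
        have hBle : lam * α * (1 - z) ≤ 1/4 := by
          nlinarith [mul_nonneg (mul_nonneg hlam.le hα0.le) hz0.le]
        have hBnn : (0:ℝ) ≤ lam * α * (1 - z) :=
          mul_nonneg (mul_nonneg hlam.le hα0.le) hs.le
        have hA1 : (1 - α * z) * (1 - α) ≤ 1 := by
          nlinarith [mul_nonneg (mul_nonneg hα0.le hz0.le) (by linarith : (0:ℝ) ≤ 1 - α)]
        have hD : (1/4 : ℝ) ≤ 2 * (1 - α * z) * (1 - α) - lam * α * (1 - z) := by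
          nlinarith
        have hsqD : (1/2 : ℝ) ≤ Real.sqrt (2 * (1 - α * z) * (1 - α) - lam * α * (1 - z)) := by
          have : Real.sqrt (1/4) ≤ _ := Real.sqrt_le_sqrt hD
          rwa [show (1/4:ℝ) = (1/2)^2 by norm_num, Real.sqrt_sq (by norm_num)] at this
        have hN : |(1 - α * z) * (1 - α) - lam * α * (1 - z)| ≤ 2 := by
          rw [abs_le]
          constructor <;> nlinarith
        have hss : (0:ℝ) < Real.sqrt (1 - z) := Real.sqrt_pos.mpr hs
        have hgz : g z = 4 / Real.sqrt (1 - z) := by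
          show 4 * ((1 - z) ^ (-(1/2) : ℝ)) = 4 / Real.sqrt (1 - z)
          rw [Real.rpow_neg hs.le, ← Real.sqrt_eq_rpow, div_eq_mul_inv]
        rw [Real.norm_eq_abs, abs_div, abs_of_nonneg (by positivity :
          (0:ℝ) ≤ Real.sqrt (1 - z) * Real.sqrt (2 * (1 - α * z) * (1 - α) - lam * α * (1 - z))),
          hgz]
        rw [div_le_div_iff₀ (by positivity) hss]
        nlinarith [abs_nonneg ((1 - α * z) * (1 - α) - lam * α * (1 - z)), hss.le,
          mul_le_mul_of_nonneg_left hsqD hss.le]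
    calc ‖Real.sqrt (α / lam) * _‖ = Real.sqrt (α / lam) * ‖_‖ := by
          rw [norm_mul, Real.norm_eq_abs, abs_of_nonneg (Real.sqrt_nonneg _)]
      _ ≤ Real.sqrt (α / lam) * C :=
          mul_le_mul_of_nonneg_left key (Real.sqrt_nonneg _)
  have hlim : Tendsto (fun α : ℝ => Real.sqrt (α / lam) * C) (nhdsWithin 0 (Set.Ioi 0)) (nhds 0) := by
    have h1 : Tendsto (fun α : ℝ => Real.sqrt (α / lam)) (nhds 0) (nhds 0) := by
      have := (Real.continuous_sqrt.comp (continuous_id.div_const lam)).tendsto 0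
      simpa [Function.comp_def] using this
    have := (h1.mono_left (nhdsWithin_le_nhds (s := Set.Ioi (0:ℝ)))).mul_const C
    simpa using this
  exact squeeze_zero_norm' hbound hlim
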